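/- Let Φ be an absolutely continuous nonnegative function on [s, t₀] satisfying Φ'(t) + 2εΦ(t) ≤ g(t)Φ(t) + f(t) for a.e. t ∈ [s,t₀], where ε > 0, and f, g are nonnegative integrable functions satisfying ∫_t^{min(t₀,t+1)} f(τ)dτ ≤ F for all t ∈ [s,t₀], and ∫_{t₁}^{t₂} g(τ)dτ ≤ G(1 + (t₂-t₁)^β) for all s ≤ t₁ ≤ t₂ ≤ t₀, for some constants F, G > 0 and β ∈ [0,1). Then there exists Γ = Γ(G,β,ε) ≥ 1 such that Φ(t₀) ≤ Γ·Φ(s)·e^{-ε(t₀-s)} + Γ·F·e^ε/(1 - e^{-ε}). -/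

import Mathlib

open MeasureTheory intervalIntegral Set

lemma bellman_cont (a b A : ℝ) (hab : a ≤ b) (u h : ℝ → ℝ) (hu : Continuous u)
    (hh : Continuous h) (hhpos : ∀ t, 0 ≤ h t)
    (hyp : ∀ t ∈ Set.Icc a b, u t ≤ A + ∫ τ in a..t, h τ * u τ) :
    u b ≤ A * Real.exp (∫ τ in a..b, h τ) := by
  set V : ℝ → ℝ := fun t => ∫ τ in a..t, h τ * u τ with hV
  set K : ℝ → ℝ := fun t => ∫ τ in a..t, h τ with hK
  have hVd : ∀ t : ℝ, HasDerivAt V (h t * u t) t := fun t =>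
    integral_hasDerivAt_right ((hh.mul hu).intervalIntegrable a t)
      ((hh.mul hu).stronglyMeasurableAtFilter _ _) (hh.mul hu).continuousAt
  have hKd : ∀ t : ℝ, HasDerivAt K (h t) t := fun t =>
    integral_hasDerivAt_right (hh.intervalIntegrable a t)
      (hh.stronglyMeasurableAtFilter _ _) hh.continuousAt
  set W : ℝ → ℝ := fun t => (A + V t) * Real.exp (-K t) with hW
  have hWd : ∀ t : ℝ, HasDerivAt W
      (h t * u t * Real.exp (-K t) + (A + V t) * (Real.exp (-K t) * -(h t))) t := by
    intro t
    exact ((hVd t).const_add A).mul (((hKd t).neg.exp))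
  have hmono : AntitoneOn W (Set.Icc a b) := by
    apply antitoneOn_of_deriv_nonpos (convex_Icc a b)
    · exact Continuous.continuousOn (by fun_prop)
    · intro t ht
      exact ((hWd t).differentiableAt).differentiableWithinAt
    · intro t ht
      rw [interior_Icc] at ht
      rw [(hWd t).deriv]
      have h1 : u t ≤ A + V t := hyp t (Ioo_subset_Icc_self ht)
      have h2 : 0 ≤ Real.exp (-K t) := (Real.exp_pos _).le
      nlinarith [hhpos t, mul_nonneg (hhpos t) (sub_nonneg.2 h1), (Real.exp_pos (-K t)).le,
        mul_nonneg (mul_nonneg (hhpos t) (sub_nonneg.2 h1)) h2]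
  have hWb : W b ≤ W a := hmono (Set.left_mem_Icc.2 hab) (Set.right_mem_Icc.2 hab) hab
  have hWa : W a = A := by simp [hW, hV, hK]
  have hub : u b ≤ A + V b := hyp b (Set.right_mem_Icc.2 hab)
  have hKb : (A + V b) * Real.exp (-K b) ≤ A := le_of_le_of_eq hWb hWa
  have : A + V b ≤ A * Real.exp (K b) := by
    have hp := Real.exp_pos (K b)
    rw [Real.exp_neg] at hKb
    calc A + V b = (A + V b) * (Real.exp (K b))⁻¹ * Real.exp (K b) := by
          field_simp
      _ ≤ A * Real.exp (K b) := by
          apply mul_le_mul_of_nonneg_right hKb hp.le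
  calc u b ≤ A + V b := hub
    _ ≤ A * Real.exp (K b) := this

lemma bellman (a b A : ℝ) (hab : a ≤ b) (hA : 0 ≤ A) (u g : ℝ → ℝ) (hu : Continuous u)
    (hg : IntervalIntegrable g MeasureTheory.volume a b) (hgpos : ∀ t ∈ Set.Icc a b, 0 ≤ g t)
    (hyp : ∀ t ∈ Set.Icc a b, u t ≤ A + ∫ τ in a..t, g τ * u τ) :
    u b ≤ A * Real.exp (∫ τ in a..b, g τ) := by
  obtain ⟨C, hC⟩ := (isCompact_Icc : IsCompact (Set.Icc a b)).exists_bound_of_continuousOn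
    hu.continuousOn
  set M : ℝ := max C 0 with hM
  have hM0 : 0 ≤ M := le_max_right _ _
  have hCM : ∀ x ∈ Set.Icc a b, |u x| ≤ M := fun x hx => (hC x hx).trans (le_max_left _ _)
  set I : ℝ := ∫ τ in a..b, g τ with hI
  -- main approximation step
  have main : ∀ δ : ℝ, 0 < δ → u b ≤ (A + M * δ) * Real.exp (I + δ) := by
    intro δ hδ
    have hgIcc : IntegrableOn g (Set.Icc a b) := by
      rw [integrableOn_Icc_iff_integrableOn_Ioc]
      exact hg.1
    set g₁ : ℝ → ℝ := (Set.Icc a b).indicator g with hg₁def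
    have hg₁ : Integrable g₁ := hgIcc.integrable_indicator measurableSet_Icc
    obtain ⟨gc, _, hgcI, hgc_cont, hgc_int⟩ := hg₁.exists_hasCompactSupport_integral_sub_le hδ
    set h : ℝ → ℝ := fun x => max (gc x) 0 with hhdef
    have hh_cont : Continuous h := hgc_cont.max continuous_const
    have hh_pos : ∀ t, 0 ≤ h t := fun t => le_max_right _ _
    have hptw : ∀ x ∈ Set.Icc a b, |g x - h x| ≤ ‖g₁ x - gc x‖ := by
      intro x hx
      have hgx : 0 ≤ g x := hgpos x hx
      have hg₁x : g₁ x = g x := Set.indicator_of_mem hx g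
      rw [hg₁x, Real.norm_eq_abs]
      rcases le_or_gt (gc x) 0 with hc | hc
      · have : h x = 0 := max_eq_right hc
        rw [this]
        rw [abs_of_nonneg (by linarith), abs_of_nonneg (by linarith)]
        linarith
      · have : h x = gc x := max_eq_left hc.le
        rw [this]
    -- interval integrabilities
    have hgu : IntervalIntegrable (fun τ => g τ * u τ) volume a b :=
      hg.mul_continuousOn hu.continuousOn
    have hhu : IntervalIntegrable (fun τ => h τ * u τ) volume a b :=
      ((hh_cont.mul hu).intervalIntegrable a b)
    have hdiff_int : Integrable (fun x => ‖g₁ x - gc x‖) := (hg₁.sub hgc_int).norm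
    have hnorm_le : (∫ τ in a..b, ‖g₁ τ - gc τ‖) ≤ δ := by
      rw [intervalIntegral.integral_of_le hab]
      calc (∫ τ in Set.Ioc a b, ‖g₁ τ - gc τ‖) ≤ ∫ τ, ‖g₁ τ - gc τ‖ :=
            setIntegral_le_integral hdiff_int
              (Filter.Eventually.of_forall (fun x => norm_nonneg _))
        _ ≤ δ := hgcI
    -- error bound for integrals of (g-h)*u on subintervals
    have herr : ∀ t ∈ Set.Icc a b,
        (∫ τ in a..t, g τ * u τ) - (∫ τ in a..t, h τ * u τ) ≤ M * δ := by
      intro t ht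
      have hat : a ≤ t := ht.1
      have hss : Set.uIcc a t ⊆ Set.uIcc a b := by
        rw [Set.uIcc_of_le hat, Set.uIcc_of_le hab]
        exact Set.Icc_subset_Icc le_rfl ht.2
      have hsub : IntervalIntegrable (fun τ => g τ * u τ - h τ * u τ) volume a t :=
        (hgu.mono_set hss).sub (hhu.mono_set hss)
      rw [← intervalIntegral.integral_sub (hgu.mono_set hss) (hhu.mono_set hss)]
      have hbound : ∀ τ ∈ Set.Icc a t, g τ * u τ - h τ * u τ ≤ ‖g₁ τ - gc τ‖ * M := by
        intro τ hτ
        have hτ' : τ ∈ Set.Icc a b := Set.Icc_subset_Icc le_rfl ht.2 hτ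
        calc g τ * u τ - h τ * u τ = (g τ - h τ) * u τ := by ring
          _ ≤ |(g τ - h τ) * u τ| := le_abs_self _
          _ = |g τ - h τ| * |u τ| := abs_mul _ _
          _ ≤ ‖g₁ τ - gc τ‖ * M :=
              mul_le_mul (hptw τ hτ') (hCM τ hτ') (abs_nonneg _) (norm_nonneg _)
      calc (∫ τ in a..t, (g τ * u τ - h τ * u τ))
          ≤ ∫ τ in a..t, ‖g₁ τ - gc τ‖ * M := by
            apply intervalIntegral.integral_mono_on hat hsub
              ((hdiff_int.mul_const M).intervalIntegrable) hbound
        _ ≤ ∫ τ in a..b, ‖g₁ τ - gc τ‖ * M := by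
            apply intervalIntegral.integral_mono_interval le_rfl hat ht.2
            · exact Filter.Eventually.of_forall
                (fun x => mul_nonneg (norm_nonneg _) hM0)
            · exact (hdiff_int.mul_const M).intervalIntegrable
        _ = (∫ τ in a..b, ‖g₁ τ - gc τ‖) * M := by
            rw [intervalIntegral.integral_mul_const]
        _ ≤ δ * M := mul_le_mul_of_nonneg_right hnorm_le hM0
        _ = M * δ := mul_comm _ _
    -- apply continuous Bellman
    have happ : u b ≤ (A + M * δ) * Real.exp (∫ τ in a..b, h τ) := by
      apply bellman_cont a b (A + M * δ) hab u h hu hh_cont hh_pos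
      intro t ht
      have := hyp t ht
      have := herr t ht
      linarith
    -- compare kernels' integrals
    have hint : (∫ τ in a..b, h τ) ≤ I + δ := by
      have h1 : (∫ τ in a..b, h τ) - I = ∫ τ in a..b, (h τ - g τ) := by
        rw [intervalIntegral.integral_sub (hh_cont.intervalIntegrable a b) hg]
      have h2 : (∫ τ in a..b, (h τ - g τ)) ≤ ∫ τ in a..b, ‖g₁ τ - gc τ‖ := by
        apply intervalIntegral.integral_mono_on hab
          ((hh_cont.intervalIntegrable a b).sub hg) hdiff_int.intervalIntegrable
        intro τ hτ
        have := hptw τ hτ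
        have := abs_le.1 this
        linarith [this.1, this.2, neg_abs_le (g τ - h τ), le_abs_self (g τ - h τ),
          abs_sub_comm (g τ) (h τ)]
      linarith [hnorm_le]
    calc u b ≤ (A + M * δ) * Real.exp (∫ τ in a..b, h τ) := happ
      _ ≤ (A + M * δ) * Real.exp (I + δ) := by
          apply mul_le_mul_of_nonneg_left (Real.exp_le_exp.2 hint)
          positivity
  -- pass to the limit δ → 0
  have hlim : u b ≤ A * Real.exp I := by
    apply le_of_forall_pos_le_add
    intro η hη
    set C₀ : ℝ := (A + M) * Real.exp (I + 1) with hC₀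
    have hC₀0 : 0 ≤ C₀ := by positivity
    set δ : ℝ := min 1 (η / (C₀ + 1)) with hδdef
    have hδpos : 0 < δ := lt_min one_pos (div_pos hη (by linarith))
    have hδ1 : δ ≤ 1 := min_le_left _ _
    have h1 := main δ hδpos
    have hexp : Real.exp (I + δ) ≤ Real.exp (I + 1) := Real.exp_le_exp.2 (by linarith)
    have hkey : (A + M * δ) * Real.exp (I + δ) ≤ A * Real.exp I + δ * C₀ := by
      have he1 : Real.exp (I + δ) = Real.exp I * Real.exp δ := Real.exp_add I δ
      have he2 : Real.exp δ - 1 ≤ δ * Real.exp δ := by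
        have k1 := mul_le_mul_of_nonneg_right (Real.add_one_le_exp (-δ)) (Real.exp_pos δ).le
        have k2 : Real.exp (-δ) * Real.exp δ = 1 := by
          rw [← Real.exp_add]; simp
        nlinarith
      have he3 : Real.exp δ ≤ Real.exp 1 := Real.exp_le_exp.2 hδ1
      have hEI : (0:ℝ) < Real.exp I := Real.exp_pos I
      have expand : (A + M * δ) * Real.exp (I + δ) - A * Real.exp I
          = A * Real.exp I * (Real.exp δ - 1) + M * δ * Real.exp (I + δ) := by
        rw [he1]; ring
      have t1 : A * Real.exp I * (Real.exp δ - 1) ≤ δ * (A * Real.exp (I + 1)) := by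
        have : A * Real.exp I * (Real.exp δ - 1) ≤ A * Real.exp I * (δ * Real.exp δ) := by
          apply mul_le_mul_of_nonneg_left he2 (by positivity)
        calc A * Real.exp I * (Real.exp δ - 1) ≤ A * Real.exp I * (δ * Real.exp δ) := this
          _ ≤ δ * (A * Real.exp (I + 1)) := by
              rw [Real.exp_add]
              nlinarith [mul_le_mul_of_nonneg_left he3
                (by positivity : (0:ℝ) ≤ A * Real.exp I * δ)]
      have t2 : M * δ * Real.exp (I + δ) ≤ δ * (M * Real.exp (I + 1)) := by
        calc M * δ * Real.exp (I + δ) ≤ M * δ * Real.exp (I + 1) :=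
              mul_le_mul_of_nonneg_left hexp (by positivity)
          _ = δ * (M * Real.exp (I + 1)) := by ring
      have : (A + M * δ) * Real.exp (I + δ) - A * Real.exp I ≤ δ * C₀ := by
        rw [expand, hC₀]
        have := add_le_add t1 t2
        calc A * Real.exp I * (Real.exp δ - 1) + M * δ * Real.exp (I + δ)
            ≤ δ * (A * Real.exp (I + 1)) + δ * (M * Real.exp (I + 1)) := this
          _ = δ * ((A + M) * Real.exp (I + 1)) := by ring
      linarith
    have hδC : δ * C₀ ≤ η := by
      have h2 : δ ≤ η / (C₀ + 1) := min_le_right _ _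
      calc δ * C₀ ≤ (η / (C₀ + 1)) * C₀ := mul_le_mul_of_nonneg_right h2 hC₀0
        _ ≤ η := by
            rw [div_mul_eq_mul_div, div_le_iff₀ (by linarith : (0:ℝ) < C₀ + 1)]
            nlinarith
    linarith
  exact hlim

lemma step_bound (s t₀ ε : ℝ) (hε : 0 < ε) (Φ Φ' f g : ℝ → ℝ)
    (hd : ∀ t ∈ Set.Icc s t₀, HasDerivAt Φ (Φ' t) t)
    (hΦ : ∀ t ∈ Set.Icc s t₀, 0 ≤ Φ t)
    (hf0 : ∀ t ∈ Set.Icc s t₀, 0 ≤ f t)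
    (hg0 : ∀ t ∈ Set.Icc s t₀, 0 ≤ g t)
    (hfi : IntervalIntegrable f MeasureTheory.volume s t₀)
    (hgi : IntervalIntegrable g MeasureTheory.volume s t₀)
    (hae : ∀ᵐ t ∂MeasureTheory.volume, t ∈ Set.Icc s t₀ →
      Φ' t + 2 * ε * Φ t ≤ g t * Φ t + f t)
    (t₁ t₂ : ℝ) (h1 : s ≤ t₁) (h12 : t₁ ≤ t₂) (h2 : t₂ ≤ t₀) :
    Φ t₂ ≤ (Φ t₁ * Real.exp (-(2 * ε) * (t₂ - t₁)) + ∫ τ in t₁..t₂, f τ) *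
      Real.exp (∫ τ in t₁..t₂, g τ) := by
  have hst : s ≤ t₀ := le_trans h1 (le_trans h12 h2)
  set ψ : ℝ → ℝ := fun t => Φ t * Real.exp (2 * ε * t) with hψ
  set ψ' : ℝ → ℝ := fun t => (Φ' t + 2 * ε * Φ t) * Real.exp (2 * ε * t) with hψ'
  have hexp : ∀ t : ℝ, HasDerivAt (fun t => Real.exp (2 * ε * t))
      (Real.exp (2 * ε * t) * (2 * ε)) t := by
    intro t
    simpa using ((hasDerivAt_id t).const_mul (2 * ε)).exp
  have hψd : ∀ t ∈ Set.Icc s t₀, HasDerivAt ψ (ψ' t) t := by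
    intro t ht
    have := (hd t ht).mul (hexp t)
    exact this.congr_deriv (by simp only [hψ']; ring)
  have hψcont : ContinuousOn ψ (Set.Icc s t₀) := fun t ht =>
    ((hψd t ht).continuousAt).continuousWithinAt
  have hψnn : ∀ t ∈ Set.Icc s t₀, 0 ≤ ψ t := fun t ht =>
    mul_nonneg (hΦ t ht) (Real.exp_pos _).le
  set Gt : ℝ → ℝ := fun t => g t * ψ t + f t * Real.exp (2 * ε * t) with hGt
  have hexpc : Continuous (fun t : ℝ => Real.exp (2 * ε * t)) := by fun_prop
  have hGi : IntervalIntegrable Gt MeasureTheory.volume s t₀ := by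
    apply IntervalIntegrable.add
    · exact hgi.mul_continuousOn (by rw [Set.uIcc_of_le hst]; exact hψcont)
    · exact hfi.mul_continuousOn hexpc.continuousOn
  have hfe : IntervalIntegrable (fun t => f t * Real.exp (2 * ε * t))
      MeasureTheory.volume s t₀ := hfi.mul_continuousOn hexpc.continuousOn
  have hgψ : IntervalIntegrable (fun t => g t * ψ t) MeasureTheory.volume s t₀ :=
    hgi.mul_continuousOn (by rw [Set.uIcc_of_le hst]; exact hψcont)
  -- a.e. inequality for ψ'
  have haeψ : ∀ᵐ t ∂MeasureTheory.volume, t ∈ Set.Icc s t₀ → ψ' t ≤ Gt t := by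
    filter_upwards [hae] with t h ht
    have h' := h ht
    have he := (Real.exp_pos (2 * ε * t)).le
    have := mul_le_mul_of_nonneg_right h' he
    calc ψ' t = (Φ' t + 2 * ε * Φ t) * Real.exp (2 * ε * t) := rfl
      _ ≤ (g t * Φ t + f t) * Real.exp (2 * ε * t) := this
      _ = Gt t := by simp only [hGt, hψ]; ring
  set φ : ℝ → ℝ := fun t => max (ψ' t) (Gt t) with hφ
  have hφae_glob : ∀ᵐ t ∂MeasureTheory.volume, t ∈ Set.Icc t₁ t₂ → φ t = Gt t := by
    filter_upwards [haeψ] with t h ht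
    exact max_eq_right (h (Set.Icc_subset_Icc h1 h2 ht))
  have hφae : ∀ᵐ t ∂(MeasureTheory.volume.restrict (Set.Icc t₁ t₂)), φ t = Gt t :=
    (ae_restrict_iff' measurableSet_Icc).2 hφae_glob
  have hGIcc : IntegrableOn Gt (Set.Icc s t₀) := by
    rw [integrableOn_Icc_iff_integrableOn_Ioc]
    exact hGi.1
  have hGIcc' : IntegrableOn Gt (Set.Icc t₁ t₂) := hGIcc.mono_set (Set.Icc_subset_Icc h1 h2)
  have hφint : IntegrableOn φ (Set.Icc t₁ t₂) := hGIcc'.congr_fun_ae (hφae.mono fun _ h => h.symm)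
  -- integral inequality
  have hkey : ∀ t ∈ Set.Icc t₁ t₂, ψ t - ψ t₁ ≤ ∫ τ in t₁..t, Gt τ := by
    intro t ht
    have hsub : Set.Icc t₁ t ⊆ Set.Icc s t₀ :=
      Set.Icc_subset_Icc h1 (ht.2.trans h2)
    have step := sub_le_integral_of_hasDeriv_right_of_le ht.1
      (hψcont.mono hsub)
      (fun x hx => (hψd x (hsub (Set.Ioo_subset_Icc_self hx))).hasDerivWithinAt)
      (hφint.mono_set (Set.Icc_subset_Icc le_rfl ht.2))
      (fun x _ => le_max_left _ _)
    have hsub2 : Set.uIoc t₁ t ⊆ Set.Icc t₁ t₂ := by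
      rw [Set.uIoc_of_le ht.1]
      exact (Set.Ioc_subset_Icc_self).trans (Set.Icc_subset_Icc le_rfl ht.2)
    have heq : (∫ τ in t₁..t, φ τ) = ∫ τ in t₁..t, Gt τ := by
      apply intervalIntegral.integral_congr_ae
      filter_upwards [hφae_glob] with x hx hx'
      exact hx (hsub2 hx')
    linarith [step, heq.le, heq.ge]
  -- Bellman setup
  set A : ℝ := ψ t₁ + ∫ τ in t₁..t₂, f τ * Real.exp (2 * ε * τ) with hA
  have hfe12 : IntervalIntegrable (fun t => f t * Real.exp (2 * ε * t))
      MeasureTheory.volume t₁ t₂ := by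
    apply hfe.mono_set
    rw [Set.uIcc_of_le h12, Set.uIcc_of_le hst]
    exact Set.Icc_subset_Icc h1 h2
  have hAnn : 0 ≤ A := by
    apply add_nonneg (hψnn t₁ ⟨h1, h12.trans h2⟩)
    apply intervalIntegral.integral_nonneg h12
    intro x hx
    exact mul_nonneg (hf0 x (Set.Icc_subset_Icc h1 h2 hx)) (Real.exp_pos _).le
  have hyp2 : ∀ t ∈ Set.Icc t₁ t₂, ψ t ≤ A + ∫ τ in t₁..t, g τ * ψ τ := by
    intro t ht
    have hgψt : IntervalIntegrable (fun τ => g τ * ψ τ) MeasureTheory.volume t₁ t := by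
      apply hgψ.mono_set
      rw [Set.uIcc_of_le ht.1, Set.uIcc_of_le hst]
      exact Set.Icc_subset_Icc h1 (ht.2.trans h2)
    have hfet : IntervalIntegrable (fun τ => f τ * Real.exp (2 * ε * τ))
        MeasureTheory.volume t₁ t := by
      apply hfe.mono_set
      rw [Set.uIcc_of_le ht.1, Set.uIcc_of_le hst]
      exact Set.Icc_subset_Icc h1 (ht.2.trans h2)
    have hsplit : (∫ τ in t₁..t, Gt τ)
        = (∫ τ in t₁..t, g τ * ψ τ) + ∫ τ in t₁..t, f τ * Real.exp (2 * ε * τ) :=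
      intervalIntegral.integral_add hgψt hfet
    have hmono : (∫ τ in t₁..t, f τ * Real.exp (2 * ε * τ))
        ≤ ∫ τ in t₁..t₂, f τ * Real.exp (2 * ε * τ) := by
      apply intervalIntegral.integral_mono_interval le_rfl ht.1 ht.2 _ hfe12
      apply (ae_restrict_iff' measurableSet_Ioc).2
      apply Filter.Eventually.of_forall
      intro x hx
      exact mul_nonneg (hf0 x ⟨h1.trans hx.1.le, hx.2.trans h2⟩) (Real.exp_pos _).le
    have := hkey t ht
    rw [hsplit] at this
    simp only [hA]
    linarith
  -- clamp ψ to get a globally continuous function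
  set c : ℝ → ℝ := fun t => max t₁ (min t t₂) with hc
  set u : ℝ → ℝ := fun t => ψ (c t) with hu
  have hcmem : ∀ x : ℝ, c x ∈ Set.Icc s t₀ := by
    intro x
    refine ⟨h1.trans (le_max_left _ _), ?_⟩
    have : c x ≤ t₂ := max_le h12 (min_le_right _ _)
    exact this.trans h2
  have hucont : Continuous u := by
    apply hψcont.comp_continuous _ hcmem
    fun_prop
  have hceq : ∀ t ∈ Set.Icc t₁ t₂, c t = t := by
    intro t ht
    simp only [hc]
    rw [min_eq_left ht.2, max_eq_right ht.1]
  have hbell : u t₂ ≤ A * Real.exp (∫ τ in t₁..t₂, g τ) := by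
    apply bellman t₁ t₂ A h12 hAnn u g hucont
    · apply hgi.mono_set
      rw [Set.uIcc_of_le h12, Set.uIcc_of_le hst]
      exact Set.Icc_subset_Icc h1 h2
    · intro t ht
      exact hg0 t (Set.Icc_subset_Icc h1 h2 ht)
    · intro t ht
      have he1 : u t = ψ t := by rw [hu]; simp only; rw [hceq t ht]
      have he2 : (∫ τ in t₁..t, g τ * u τ) = ∫ τ in t₁..t, g τ * ψ τ := by
        apply intervalIntegral.integral_congr
        intro τ hτ
        rw [Set.uIcc_of_le ht.1] at hτ
        have : τ ∈ Set.Icc t₁ t₂ := Set.Icc_subset_Icc le_rfl ht.2 hτ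
        simp only [hu]
        rw [hceq τ this]
      rw [he1, he2]
      exact hyp2 t ht
  have hψt₂ : ψ t₂ ≤ A * Real.exp (∫ τ in t₁..t₂, g τ) := by
    have : u t₂ = ψ t₂ := by rw [hu]; simp only; rw [hceq t₂ ⟨h12, le_rfl⟩]
    rwa [this] at hbell
  -- convert back to Φ
  have hfi12 : IntervalIntegrable f MeasureTheory.volume t₁ t₂ := by
    apply hfi.mono_set
    rw [Set.uIcc_of_le h12, Set.uIcc_of_le hst]
    exact Set.Icc_subset_Icc h1 h2
  have hfe2 : (∫ τ in t₁..t₂, f τ * Real.exp (2 * ε * τ))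
      ≤ (∫ τ in t₁..t₂, f τ) * Real.exp (2 * ε * t₂) := by
    rw [← intervalIntegral.integral_mul_const]
    apply intervalIntegral.integral_mono_on h12 hfe12 (hfi12.mul_const _)
    intro τ hτ
    apply mul_le_mul_of_nonneg_left _ (hf0 τ (Set.Icc_subset_Icc h1 h2 hτ))
    exact Real.exp_le_exp.2 (by nlinarith [hτ.2, hε])
  have hE2 : (0:ℝ) < Real.exp (2 * ε * t₂) := Real.exp_pos _
  rw [← mul_le_mul_iff_of_pos_right hE2]
  have hexpG : (0:ℝ) ≤ Real.exp (∫ τ in t₁..t₂, g τ) := (Real.exp_pos _).le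
  have hchain : ψ t₂ ≤ (Φ t₁ * Real.exp (2 * ε * t₁)
      + (∫ τ in t₁..t₂, f τ) * Real.exp (2 * ε * t₂)) * Real.exp (∫ τ in t₁..t₂, g τ) := by
    apply hψt₂.trans
    apply mul_le_mul_of_nonneg_right _ hexpG
    simp only [hA, hψ]
    linarith [hfe2]
  have hgoal : (Φ t₁ * Real.exp (-(2 * ε) * (t₂ - t₁)) + ∫ τ in t₁..t₂, f τ) *
      Real.exp (∫ τ in t₁..t₂, g τ) * Real.exp (2 * ε * t₂)
      = (Φ t₁ * Real.exp (2 * ε * t₁)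
      + (∫ τ in t₁..t₂, f τ) * Real.exp (2 * ε * t₂)) * Real.exp (∫ τ in t₁..t₂, g τ) := by
    have : Real.exp (-(2 * ε) * (t₂ - t₁)) * Real.exp (2 * ε * t₂) = Real.exp (2 * ε * t₁) := by
      rw [← Real.exp_add]
      ring_nf
    rw [← this]
    ring
  rw [hgoal]
  calc Φ t₂ * Real.exp (2 * ε * t₂) = ψ t₂ := rfl
    _ ≤ _ := hchain

lemma fbound_nat (s t₀ F : ℝ) (f : ℝ → ℝ) (hst : s ≤ t₀)
    (hf0 : ∀ t ∈ Set.Icc s t₀, 0 ≤ f t)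
    (hfi : IntervalIntegrable f MeasureTheory.volume s t₀)
    (hF : ∀ t ∈ Set.Icc s t₀, (∫ τ in t..min t₀ (t + 1), f τ) ≤ F) :
    ∀ m : ℕ, ∀ a, s ≤ a → a ≤ t₀ → (∫ τ in a..min t₀ (a + m), f τ) ≤ m * F := by
  have hint : ∀ x y, s ≤ x → x ≤ y → y ≤ t₀ →
      IntervalIntegrable f MeasureTheory.volume x y := by
    intro x y hx hxy hy
    apply hfi.mono_set
    rw [Set.uIcc_of_le hxy, Set.uIcc_of_le hst]
    exact Set.Icc_subset_Icc hx hy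
  have hae0 : ∀ x y, s ≤ x → y ≤ t₀ →
      0 ≤ᵐ[MeasureTheory.volume.restrict (Set.Ioc x y)] f := by
    intro x y hx hy
    apply (ae_restrict_iff' measurableSet_Ioc).2
    apply Filter.Eventually.of_forall
    intro τ hτ
    exact hf0 τ ⟨hx.trans hτ.1.le, hτ.2.trans hy⟩
  intro m
  induction m with
  | zero =>
    intro a hsa hat
    simp [min_eq_right, hat]
  | succ m ih =>
    intro a hsa hat
    set b : ℝ := min t₀ (a + 1) with hb
    have hab : a ≤ b := le_min hat (by linarith)
    have hbt : b ≤ t₀ := min_le_left _ _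
    have hsb : s ≤ b := hsa.trans hab
    set d : ℝ := min t₀ (a + (m + 1 : ℕ)) with hd
    have had : a ≤ d := le_min hat (by push_cast; linarith)
    have hdt : d ≤ t₀ := min_le_left _ _
    have hbd : b ≤ d := le_min hbt ((min_le_right t₀ (a+1)).trans (by push_cast; linarith))
    have hdm : d ≤ min t₀ (b + m) := by
      rcases le_or_gt (a + 1) t₀ with h | h
      · have hbeq : b = a + 1 := min_eq_right h
        apply le_min hdt
        rw [hbeq, hd]
        exact (min_le_right _ _).trans (by push_cast; linarith)
      · have hbeq : b = t₀ := min_eq_left h.le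
        apply le_min hdt
        rw [hbeq]
        exact hdt.trans (le_add_of_nonneg_right (by positivity))
    have hsplit : (∫ τ in a..d, f τ) = (∫ τ in a..b, f τ) + ∫ τ in b..d, f τ :=
      (intervalIntegral.integral_add_adjacent_intervals
        (hint a b hsa hab hbt) (hint b d hsb hbd hdt)).symm
    have h1 : (∫ τ in a..b, f τ) ≤ F := hF a ⟨hsa, hat⟩
    have h2 : (∫ τ in b..d, f τ) ≤ m * F := by
      calc (∫ τ in b..d, f τ) ≤ ∫ τ in b..min t₀ (b + m), f τ := by
            apply intervalIntegral.integral_mono_interval le_rfl hbd hdm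
              (hae0 b (min t₀ (b + m)) hsb (min_le_left _ _))
              (hint b (min t₀ (b + m)) hsb (le_min hbt (le_add_of_nonneg_right (by positivity)))
                (min_le_left _ _))
        _ ≤ m * F := ih b hsb hbt
    rw [hsplit]
    push_cast
    linarith

set_option maxHeartbeats 1000000 in
theorem stmt14 (ε G β : ℝ) (hε : 0 < ε) (hG : 0 < G) (hβ0 : 0 ≤ β) (hβ1 : β < 1) :
    ∃ Γ : ℝ, 1 ≤ Γ ∧
      ∀ (s t₀ : ℝ) (Φ Φ' f g : ℝ → ℝ) (F : ℝ), 0 < F → s ≤ t₀ →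
        (∀ t ∈ Set.Icc s t₀, HasDerivAt Φ (Φ' t) t) →
        (∀ t ∈ Set.Icc s t₀, 0 ≤ Φ t) →
        (∀ t ∈ Set.Icc s t₀, 0 ≤ f t) → (∀ t ∈ Set.Icc s t₀, 0 ≤ g t) →
        IntervalIntegrable f MeasureTheory.volume s t₀ →
        IntervalIntegrable g MeasureTheory.volume s t₀ →
        (∀ᵐ t ∂MeasureTheory.volume, t ∈ Set.Icc s t₀ →
          Φ' t + 2 * ε * Φ t ≤ g t * Φ t + f t) →
        (∀ t ∈ Set.Icc s t₀, (∫ τ in t..min t₀ (t + 1), f τ) ≤ F) →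
        (∀ t₁ t₂, s ≤ t₁ → t₁ ≤ t₂ → t₂ ≤ t₀ →
          (∫ τ in t₁..t₂, g τ) ≤ G * (1 + (t₂ - t₁) ^ β)) →
        Φ t₀ ≤ Γ * Φ s * Real.exp (-ε * (t₀ - s)) +
          Γ * F * Real.exp ε / (1 - Real.exp (-ε)) := by
  -- choice of the interval length n
  have hβ' : 0 < 1 - β := by linarith
  set A₀ : ℝ := max 1 (2 * G / ε) with hA₀def
  have hA₀1 : 1 ≤ A₀ := le_max_left _ _
  have hA₀G : 2 * G / ε ≤ A₀ := le_max_right _ _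
  set p : ℝ := 1 / (1 - β) with hpdef
  have hp1 : 1 ≤ p := by
    rw [hpdef, le_div_iff₀ hβ']
    linarith
  set L : ℝ := A₀ ^ p with hLdef
  have hL1 : A₀ ≤ L := by
    calc A₀ = A₀ ^ (1:ℝ) := (Real.rpow_one A₀).symm
      _ ≤ A₀ ^ p := Real.rpow_le_rpow_of_exponent_le hA₀1 hp1
  have hLpos : 1 ≤ L := hA₀1.trans hL1
  set n : ℕ := ⌈L⌉₊ with hndef
  have hnL : L ≤ (n : ℝ) := Nat.le_ceil L
  have hn1 : 1 ≤ (n : ℝ) := hLpos.trans hnL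
  have hnpos : (0:ℝ) < n := by linarith
  -- kernel bound
  have hker : ∀ x : ℝ, 0 ≤ x → x ≤ (n:ℝ) → G * (1 + x ^ β) ≤ ε * n := by
    intro x hx hxn
    have hxβ : x ^ β ≤ (n:ℝ) ^ β := Real.rpow_le_rpow hx hxn hβ0
    have hnβ' : A₀ ≤ (n:ℝ) ^ (1 - β) := by
      calc A₀ = (A₀ ^ p) ^ (1 - β) := by
            rw [← Real.rpow_mul (by positivity : (0:ℝ) ≤ A₀)]
            rw [show p * (1 - β) = 1 by rw [hpdef]; field_simp]
            exact (Real.rpow_one A₀).symm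
        _ ≤ (n:ℝ) ^ (1 - β) := Real.rpow_le_rpow (by positivity) hnL hβ'.le
    have hGn : 2 * G / ε ≤ (n:ℝ) ^ (1 - β) := hA₀G.trans hnβ'
    have hsplit : ((n:ℝ) ^ β) * ((n:ℝ) ^ (1 - β)) = (n:ℝ) := by
      rw [← Real.rpow_add hnpos]
      simp
    have hn_ge : 2 * G / ε ≤ (n:ℝ) := hA₀G.trans (hL1.trans hnL)
    have h1 : G * 1 ≤ ε / 2 * n := by
      rw [div_le_iff₀ hε] at hn_ge
      nlinarith
    have h2 : G * ((n:ℝ) ^ β) ≤ ε / 2 * n := by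
      have hβn : (0:ℝ) ≤ (n:ℝ) ^ β := Real.rpow_nonneg hnpos.le β
      have : 2 * G / ε * ((n:ℝ) ^ β) ≤ (n:ℝ) ^ (1 - β) * ((n:ℝ) ^ β) :=
        mul_le_mul_of_nonneg_right hGn hβn
      rw [div_mul_eq_mul_div, div_le_iff₀ hε] at this
      nlinarith [hsplit]
    have h3 : G * (x ^ β) ≤ G * ((n:ℝ) ^ β) := mul_le_mul_of_nonneg_left hxβ hG.le
    linarith
  -- the constant
  set q : ℝ := Real.exp (-(ε * n)) with hqdef
  have hq1 : q < 1 := by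
    rw [hqdef, ← Real.exp_zero]
    apply Real.exp_lt_exp.2
    have : (0:ℝ) < ε * n := by positivity
    linarith
  have hq0 : 0 < q := Real.exp_pos _
  set D : ℝ := Real.exp (ε * n) * ((n:ℝ) * Real.exp (ε * n) / (1 - q) + n) with hDdef
  have hD0 : 0 ≤ D := by
    apply mul_nonneg (Real.exp_pos _).le
    have : (0:ℝ) ≤ (n:ℝ) * Real.exp (ε * n) / (1 - q) := by
      apply div_nonneg (by positivity) (by linarith)
    linarith
  refine ⟨Real.exp (2 * ε * n) + D, ?_, ?_⟩
  · have : (1:ℝ) ≤ Real.exp (2 * ε * n) := Real.one_le_exp (by positivity)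
    linarith
  intro s t₀ Φ Φ' f g F hF0 hst hd hΦ hf0 hg0 hfi hgi hae hF hGint
  -- per-step estimate
  have hstep2 : ∀ t₁ t₂, s ≤ t₁ → t₁ ≤ t₂ → t₂ ≤ t₀ → t₂ - t₁ ≤ (n:ℝ) →
      Φ t₂ ≤ (Φ t₁ * Real.exp (-(2 * ε) * (t₂ - t₁)) + (n:ℝ) * F) * Real.exp (ε * n) := by
    intro t₁ t₂ h1 h12 h2 hlen
    have hfint : (∫ τ in t₁..t₂, f τ) ≤ (n:ℝ) * F := by
      calc (∫ τ in t₁..t₂, f τ) ≤ ∫ τ in t₁..min t₀ (t₁ + n), f τ := by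
            apply intervalIntegral.integral_mono_interval le_rfl h12
              (le_min h2 (by linarith))
            · apply (ae_restrict_iff' measurableSet_Ioc).2
              apply Filter.Eventually.of_forall
              intro τ hτ
              exact hf0 τ ⟨h1.trans hτ.1.le, hτ.2.trans (min_le_left _ _)⟩
            · apply hfi.mono_set
              rw [Set.uIcc_of_le (le_min (h12.trans h2) (by linarith)), Set.uIcc_of_le hst]
              exact Set.Icc_subset_Icc h1 (min_le_left _ _)
        _ ≤ (n:ℝ) * F := fbound_nat s t₀ F f hst hf0 hfi hF n t₁ h1 (h12.trans h2)
    have hgint : (∫ τ in t₁..t₂, g τ) ≤ ε * n := by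
      calc (∫ τ in t₁..t₂, g τ) ≤ G * (1 + (t₂ - t₁) ^ β) := hGint t₁ t₂ h1 h12 h2
        _ ≤ ε * n := hker (t₂ - t₁) (by linarith) hlen
    have hbase := step_bound s t₀ ε hε Φ Φ' f g hd hΦ hf0 hg0 hfi hgi hae t₁ t₂ h1 h12 h2
    apply hbase.trans
    have hΦ1 : 0 ≤ Φ t₁ := hΦ t₁ ⟨h1, h12.trans h2⟩
    have hpar : 0 ≤ Φ t₁ * Real.exp (-(2 * ε) * (t₂ - t₁)) + ∫ τ in t₁..t₂, f τ := by
      have : (0:ℝ) ≤ ∫ τ in t₁..t₂, f τ := by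
        apply intervalIntegral.integral_nonneg h12
        intro τ hτ
        exact hf0 τ ⟨h1.trans hτ.1, hτ.2.trans h2⟩
      positivity
    apply mul_le_mul (by linarith [hfint]) (Real.exp_le_exp.2 hgint) (Real.exp_pos _).le
    positivity
  -- induction along the grid
  have hind : ∀ k : ℕ, s + k * n ≤ t₀ →
      Φ (s + k * n) ≤ q ^ k * Φ s + ((n:ℝ) * F * Real.exp (ε * n)) / (1 - q) := by
    intro k
    induction k with
    | zero =>
      intro hk
      have h1 : 0 ≤ ((n:ℝ) * F * Real.exp (ε * n)) / (1 - q) := by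
        apply div_nonneg (by positivity) (by linarith)
      simp only [Nat.cast_zero, zero_mul, add_zero, pow_zero, one_mul]
      linarith
    | succ k ih =>
      intro hk
      have hkn : s + k * n ≤ t₀ := by
        push_cast at hk ⊢
        nlinarith [hnpos]
      have ihk := ih hkn
      set c : ℝ := (n:ℝ) * F * Real.exp (ε * n) with hcdef
      set t₁ : ℝ := s + (k : ℕ) * (n:ℝ) with ht₁
      set t₂ : ℝ := s + ((k+1 : ℕ) : ℝ) * (n:ℝ) with ht₂
      have harg : t₂ - t₁ = (n:ℝ) := by rw [ht₁, ht₂]; push_cast; ring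
      have h12 : t₁ ≤ t₂ := by rw [ht₁, ht₂]; push_cast; nlinarith [hnpos]
      have hstep := hstep2 t₁ t₂ (le_add_of_nonneg_right (by positivity)) h12 hk
        (by rw [harg])
      rw [harg] at hstep
      have hee : Real.exp (-(2*ε) * (n:ℝ)) * Real.exp (ε * (n:ℝ)) = q := by
        rw [hqdef, ← Real.exp_add]
        ring_nf
      have hqe : (Φ t₁ * Real.exp (-(2*ε) * (n:ℝ)) + (n:ℝ) * F) * Real.exp (ε * n)
          = Φ t₁ * q + c := by
        rw [← hee, hcdef]
        ring
      rw [hqe] at hstep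
      have hΦ1 : 0 ≤ Φ t₁ := hΦ t₁ ⟨le_add_of_nonneg_right (by positivity), hkn⟩
      have hne : (1:ℝ) - q ≠ 0 := ne_of_gt (by linarith)
      have hxc : c / (1 - q) * (1 - q) = c := div_mul_cancel₀ c hne
      have heq : q * (c / (1 - q)) + c = c / (1 - q) := by linear_combination -hxc
      calc Φ t₂ ≤ Φ t₁ * q + c := hstep
        _ ≤ (q^k * Φ s + c/(1-q)) * q + c := by
            have := mul_le_mul_of_nonneg_right ihk hq0.le
            linarith
        _ = q^(k+1) * Φ s + (q * (c/(1-q)) + c) := by ring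
        _ = q^(k+1) * Φ s + c/(1-q) := by rw [heq]
  -- final assembly
  set c : ℝ := (n:ℝ) * F * Real.exp (ε * n) with hcdef
  set N : ℕ := ⌊(t₀ - s) / (n:ℝ)⌋₊ with hNdef
  have hNle : s + (N:ℝ) * n ≤ t₀ := by
    have h1 : ((N:ℕ) : ℝ) ≤ (t₀ - s) / (n:ℝ) := Nat.floor_le (div_nonneg (by linarith) hnpos.le)
    rw [le_div_iff₀ hnpos] at h1
    linarith
  have hNgt : t₀ - (s + (N:ℝ) * n) ≤ n := by
    have h1 : (t₀ - s) / (n:ℝ) < (N:ℝ) + 1 := Nat.lt_floor_add_one _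
    rw [div_lt_iff₀ hnpos] at h1
    nlinarith
  set tN : ℝ := s + (N:ℝ) * n with htN
  have hstN : s ≤ tN := le_add_of_nonneg_right (by positivity)
  have hfin := hstep2 tN t₀ hstN (by linarith) le_rfl (by linarith)
  have hindN := hind N hNle
  have hexple : Real.exp (-(2*ε) * (t₀ - tN)) ≤ 1 := by
    rw [← Real.exp_zero]
    apply Real.exp_le_exp.2
    nlinarith [hε]
  have hΦN : 0 ≤ Φ tN := hΦ tN ⟨hstN, hNle⟩
  have hfin2 : Φ t₀ ≤ (Φ tN + (n:ℝ) * F) * Real.exp (ε * n) := by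
    apply hfin.trans
    apply mul_le_mul_of_nonneg_right _ (Real.exp_pos _).le
    nlinarith [hexple, hΦN]
  have hqN : q ^ N * Real.exp (ε * n) ≤ Real.exp (-ε * (t₀ - s)) * Real.exp (2 * ε * n) := by
    rw [hqdef, ← Real.exp_nat_mul, ← Real.exp_add, ← Real.exp_add]
    apply Real.exp_le_exp.2
    nlinarith [hNgt, hε]
  have hq1' : 0 < 1 - q := by linarith
  have hDF : Real.exp (ε * n) * (c / (1 - q) + (n:ℝ) * F) = D * F := by
    rw [hDdef, hcdef]
    ring
  have hmain : Φ t₀ ≤ Real.exp (2 * ε * n) * Φ s * Real.exp (-ε * (t₀ - s)) + D * F := by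
    have h1 : Φ t₀ ≤ (q ^ N * Φ s + c / (1 - q) + (n:ℝ) * F) * Real.exp (ε * n) := by
      apply hfin2.trans
      apply mul_le_mul_of_nonneg_right _ (Real.exp_pos _).le
      linarith [hindN]
    have h2 : (q ^ N * Φ s + c / (1 - q) + (n:ℝ) * F) * Real.exp (ε * n)
        = q ^ N * Real.exp (ε * n) * Φ s + Real.exp (ε * n) * (c / (1 - q) + (n:ℝ) * F) := by
      ring
    have hΦs : 0 ≤ Φ s := hΦ s ⟨le_rfl, hst⟩
    have h3 : q ^ N * Real.exp (ε * n) * Φ s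
        ≤ Real.exp (-ε * (t₀ - s)) * Real.exp (2 * ε * n) * Φ s :=
      mul_le_mul_of_nonneg_right hqN hΦs
    rw [h2] at h1
    rw [hDF] at h1
    calc Φ t₀ ≤ q ^ N * Real.exp (ε * n) * Φ s + D * F := h1
      _ ≤ Real.exp (-ε * (t₀ - s)) * Real.exp (2 * ε * n) * Φ s + D * F := by linarith
      _ = Real.exp (2 * ε * n) * Φ s * Real.exp (-ε * (t₀ - s)) + D * F := by ring
  set Γ : ℝ := Real.exp (2 * ε * n) + D with hΓdef
  have hΓD : D ≤ Γ := by
    have : (0:ℝ) < Real.exp (2 * ε * n) := Real.exp_pos _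
    linarith
  have hΓ0 : 0 ≤ Γ := by
    have : (0:ℝ) < Real.exp (2 * ε * n) := Real.exp_pos _
    linarith
  have hΦs : 0 ≤ Φ s := hΦ s ⟨le_rfl, hst⟩
  have hterm1 : Real.exp (2 * ε * n) * Φ s * Real.exp (-ε * (t₀ - s))
      ≤ Γ * Φ s * Real.exp (-ε * (t₀ - s)) := by
    apply mul_le_mul_of_nonneg_right _ (Real.exp_pos _).le
    apply mul_le_mul_of_nonneg_right _ hΦs
    linarith
  have hden : 0 < 1 - Real.exp (-ε) := by
    have : Real.exp (-ε) < 1 := by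
      rw [← Real.exp_zero]
      exact Real.exp_lt_exp.2 (by linarith)
    linarith
  have hterm2 : D * F ≤ Γ * F * Real.exp ε / (1 - Real.exp (-ε)) := by
    have h1 : D * F ≤ Γ * F := mul_le_mul_of_nonneg_right hΓD hF0.le
    have h2 : Γ * F ≤ Γ * F * Real.exp ε / (1 - Real.exp (-ε)) := by
      rw [le_div_iff₀ hden]
      have hΓF : 0 ≤ Γ * F := mul_nonneg hΓ0 hF0.le
      nlinarith [Real.one_le_exp hε.le, Real.exp_pos (-ε)]
    exact h1.trans h2
  exact hmain.trans (add_le_add hterm1 hterm2)
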